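/- Conformal guarantee with estimated targets (combination of Theorem 1 with the Chernoff bound for SMC): let X_1, ..., X_{n+1} be i.i.d. random variables with values in a measurable space Θ, let p : Θ → [0,1] be a measurable function (the true satisfaction function), and suppose that conditionally on X_i = θ, the observed label Ȳ_i is the mean of M i.i.d. Bernoulli(p(θ)) random variables, with the (X_i, Ȳ_i) i.i.d. across i = 1, ..., n+1. Let f : Θ → ℝ be a fixed measurable predictor and u : Θ → ℝ a fixed measurable function with u > 0 everywhere, both chosen independently of these pairs. Define Ṽ_i = |Ȳ_i − f(X_i)| / u(X_i), fix ε ∈ (0,1) with ⌈(n+1)(1−ε)⌉ ≤ n, and let τ̃_ε be the ⌈(n+1)(1−ε)⌉-th smallest of Ṽ_1, ..., Ṽ_n. Then for every η > 0, P(|p(X_{n+1}) − f(X_{n+1})| ≤ τ̃_ε · u(X_{n+1}) + η) ≥ 1 − ε − 2·exp(−2·M·η²). -/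

import Mathlib

open MeasureTheory ProbabilityTheory

/-- The `k`-th smallest value (0-indexed) among `v 0, ..., v (n-1)`. -/
noncomputable def orderStat {n : ℕ} (v : Fin n → ℝ) (k : Fin n) : ℝ :=
  v (Tuple.sort v k)

/-- The Bernoulli distribution with success probability `p`, as a measure on `ℝ`:
it puts mass `p` on `1` and mass `1 - p` on `0`. -/
noncomputable def bernoulliReal (p : ℝ) : Measure ℝ :=
  ENNReal.ofReal p • Measure.dirac 1 + ENNReal.ofReal (1 - p) • Measure.dirac 0

section Helpers
open Real Finset

/-- Hoeffding's lemma for a Bernoulli variable: the centered mgf bound. -/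
lemma bernoulli_mgf_le (q t : ℝ) (hq0 : 0 ≤ q) (hq1 : q ≤ 1) :
    q * exp (t * (1 - q)) + (1 - q) * exp (-(t * q)) ≤ exp (t ^ 2 / 8) := by
  -- D s = 1 - q + q * exp s > 0
  set D : ℝ → ℝ := fun s => 1 - q + q * exp s with hD
  have hDpos : ∀ s, 0 < D s := by
    intro s
    rcases eq_or_lt_of_le hq1 with h | h
    · simp [hD, ← h]; positivity
    · have : 0 < 1 - q := by linarith
      have : 0 ≤ q * exp s := by positivity
      simp only [hD]; linarith
  -- L s = log (D s) - q * s
  set L : ℝ → ℝ := fun s => Real.log (D s) - q * s with hLdef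
  set L' : ℝ → ℝ := fun s => q * exp s / D s - q with hL'def
  set L'' : ℝ → ℝ := fun s => q * exp s * (1 - q) / (D s) ^ 2 with hL''def
  have hDderiv : ∀ s, HasDerivAt D (q * exp s) s := by
    intro s
    exact ((Real.hasDerivAt_exp s).const_mul q).const_add (1 - q)
  have hLderiv : ∀ s, HasDerivAt L (L' s) s := by
    intro s
    have h1 : HasDerivAt (fun s => Real.log (D s)) (q * exp s / D s) s :=
      (hDderiv s).log (hDpos s).ne'
    have h2 := h1.sub ((hasDerivAt_id s).const_mul q)
    rw [mul_one] at h2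
    exact h2
  have hL'deriv : ∀ s, HasDerivAt L' (L'' s) s := by
    intro s
    have h1 : HasDerivAt (fun s => q * exp s) (q * exp s) s :=
      (Real.hasDerivAt_exp s).const_mul q
    have h2 : HasDerivAt (fun s => q * exp s / D s)
        ((q * exp s * D s - q * exp s * (q * exp s)) / (D s) ^ 2) s :=
      h1.div (hDderiv s) (hDpos s).ne'
    have heq : (q * exp s * D s - q * exp s * (q * exp s)) / (D s) ^ 2 = L'' s := by
      simp only [hD, hL''def]; ring_nf
    rw [heq] at h2
    simpa [hL'def] using h2.sub_const q
  have hL''bound : ∀ s, |L'' s| ≤ 4⁻¹ := by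
    intro s
    have h1 : 0 ≤ L'' s :=
      div_nonneg (mul_nonneg (mul_nonneg hq0 (exp_pos s).le) (by linarith)) (sq_nonneg _)
    rw [abs_of_nonneg h1, hL''def, div_le_iff₀ (pow_pos (hDpos s) 2)]
    have key : 0 ≤ ((1 - q) - q * exp s) ^ 2 := sq_nonneg _
    simp only [hD]; nlinarith [exp_pos s]
  have hL'bound : ∀ s, |L' s| ≤ |s| / 4 := by
    intro s
    have hL'0 : L' 0 = 0 := by simp [hL'def, hD]
    have := Convex.norm_image_sub_le_of_norm_hasDerivWithin_le
      (f := L') (f' := L'') (s := Set.univ) (C := 4⁻¹)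
      (fun x _ => (hL'deriv x).hasDerivWithinAt)
      (fun x _ => by simpa using hL''bound x) convex_univ (Set.mem_univ 0) (Set.mem_univ s)
    rw [hL'0, sub_zero, Real.norm_eq_abs, Real.norm_eq_abs, sub_zero] at this
    linarith [this]
  -- L t ≤ t^2/8 via FTC
  have hL'cont : Continuous L' := by
    simp only [hL'def]
    exact ((continuous_const.mul Real.continuous_exp).div
      (by show Continuous (fun s => 1 - q + q * exp s); exact (continuous_const.add (continuous_const.mul Real.continuous_exp)))
      (fun s => (hDpos s).ne')).sub continuous_const
  have hftc : ∫ s in (0:ℝ)..t, L' s = L t := by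
    have h0 : L 0 = 0 := by simp [hLdef, hD]
    rw [intervalIntegral.integral_eq_sub_of_hasDerivAt (fun x _ => hLderiv x)
      (hL'cont.intervalIntegrable 0 t), h0, sub_zero]
  have habs : |L t| ≤ t ^ 2 / 8 := by
    have hbd := intervalIntegral.norm_integral_le_abs_of_norm_le (μ := volume)
      (f := L') (g := fun s => |s| / 4) (a := 0) (b := t)
      (Filter.Eventually.of_forall (fun s => by simpa using hL'bound s))
      ((continuous_abs.div_const 4).intervalIntegrable 0 t)
    rw [hftc, Real.norm_eq_abs] at hbd
    have hval : |∫ s in (0:ℝ)..t, |s| / 4| = t ^ 2 / 8 := by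
      rcases le_or_gt 0 t with h | h
      · have : ∫ s in (0:ℝ)..t, |s| / 4 = t ^ 2 / 8 := by
          rw [intervalIntegral.integral_congr (g := fun s => s / 4)
            (fun s hs => by
              rw [Set.uIcc_of_le h] at hs
              simp [abs_of_nonneg hs.1])]
          simp [intervalIntegral.integral_div, integral_id]; ring
        rw [this, abs_of_nonneg (by positivity)]
      · have : ∫ s in (0:ℝ)..t, |s| / 4 = -(t ^ 2 / 8) := by
          rw [intervalIntegral.integral_congr (g := fun s => -s / 4)
            (fun s hs => by
              rw [Set.uIcc_of_ge h.le] at hs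
              simp [abs_of_nonpos hs.2, neg_div])]
          have : ∫ s in (0:ℝ)..t, -s / 4 = -(t^2/8) := by
            simp only [neg_div]
            rw [intervalIntegral.integral_neg, intervalIntegral.integral_div, integral_id]
            ring
          rw [this]
        rw [this, abs_neg, abs_of_nonneg (by positivity)]
    rw [hval] at hbd
    exact hbd
  -- conclude
  have hLle : L t ≤ t ^ 2 / 8 := (abs_le.mp habs).2
  have hexp : q * exp (t * (1 - q)) + (1 - q) * exp (-(t * q)) = exp (L t) := by
    rw [hLdef]
    simp only
    rw [Real.exp_sub, Real.exp_log (hDpos t)]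
    rw [hD]
    simp only
    have : exp (t * (1 - q)) = exp t * exp (-(t*q)) := by
      rw [← Real.exp_add]; ring_nf
    rw [this]
    rw [eq_div_iff (exp_pos (q*t)).ne']
    have h1 : exp (-(t*q)) * exp (q*t) = 1 := by
      rw [← Real.exp_add]; simp [mul_comm]
    linear_combination (q * Real.exp t + (1 - q)) * h1
  rw [hexp]
  exact Real.exp_le_exp.mpr hLle


lemma bernoulliReal_isProb {q : ℝ} (hq0 : 0 ≤ q) (hq1 : q ≤ 1) :
    IsProbabilityMeasure (bernoulliReal q) := by
  constructor
  simp [bernoulliReal, ← ENNReal.ofReal_add hq0 (by linarith : (0:ℝ) ≤ 1 - q)]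

lemma integrable_dirac {g : ℝ → ℝ} (hg : Measurable g) (a : ℝ) :
    Integrable g (Measure.dirac a) :=
  ⟨hg.aestronglyMeasurable, by
    simpa [HasFiniteIntegral, lintegral_dirac' a hg.enorm] using ENNReal.coe_lt_top⟩

lemma bernoulliReal_integrable {q : ℝ} (g : ℝ → ℝ) (hg : Measurable g) :
    Integrable g (bernoulliReal q) := by
  unfold bernoulliReal
  exact ((integrable_dirac hg _).smul_measure ENNReal.ofReal_ne_top).add_measure
    ((integrable_dirac hg _).smul_measure ENNReal.ofReal_ne_top)

lemma bernoulliReal_integral {q : ℝ} (hq0 : 0 ≤ q) (hq1 : q ≤ 1) (g : ℝ → ℝ) (hg : Measurable g) :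
    ∫ x, g x ∂(bernoulliReal q) = q * g 1 + (1 - q) * g 0 := by
  unfold bernoulliReal
  rw [integral_add_measure
      ((integrable_dirac hg _).smul_measure ENNReal.ofReal_ne_top)
      ((integrable_dirac hg _).smul_measure ENNReal.ofReal_ne_top),
    integral_smul_measure, integral_smul_measure, integral_dirac, integral_dirac,
    ENNReal.toReal_ofReal hq0, ENNReal.toReal_ofReal (by linarith : (0:ℝ) ≤ 1 - q), smul_eq_mul, smul_eq_mul]

/-- Integral of a product over a constant-family product measure. -/
lemma pi_integral_pow {μ1 : Measure ℝ} [SigmaFinite μ1] (ι : Type*) [Fintype ι] (g : ℝ → ℝ) :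
    ∫ y : ι → ℝ, ∏ i, g (y i) ∂(Measure.pi fun _ => μ1) = (∫ x, g x ∂μ1) ^ (Fintype.card ι) := by
  letI : MeasureSpace ℝ := ⟨μ1⟩
  exact MeasureTheory.integral_fintype_prod_eq_pow (ι := ι) g

lemma pi_integrable_prod {μ1 : Measure ℝ} [SigmaFinite μ1] (ι : Type*) [Fintype ι] (g : ℝ → ℝ)
    (hg : Integrable g μ1) :
    Integrable (fun y : ι → ℝ => ∏ i, g (y i)) (Measure.pi fun _ => μ1) := by
  letI : MeasureSpace ℝ := ⟨μ1⟩
  exact MeasureTheory.Integrable.fintype_prod (f := fun _ : ι => g) (fun _ => hg)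
lemma bernoulli_mean_tail {q : ℝ} (hq0 : 0 ≤ q) (hq1 : q ≤ 1) (M : ℕ) (hM : 1 ≤ M)
    (η : ℝ) (hη : 0 < η) :
    (Measure.pi fun _ : Fin M => bernoulliReal q) {y | η < |(M:ℝ)⁻¹ * (∑ j, y j) - q|}
      ≤ ENNReal.ofReal (2 * Real.exp (-2 * M * η ^ 2)) := by
  haveI : IsProbabilityMeasure (bernoulliReal q) := bernoulliReal_isProb hq0 hq1
  set pm : Measure (Fin M → ℝ) := Measure.pi fun _ => bernoulliReal q with hpm
  haveI : IsProbabilityMeasure pm := by rw [hpm]; infer_instance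
  set S : (Fin M → ℝ) → ℝ := fun y => ∑ j, (y j - q) with hS
  have hMpos : (0:ℝ) < M := by exact_mod_cast hM
  -- mgf bound
  have hmgf : ∀ t : ℝ, Integrable (fun y => exp (t * S y)) pm ∧
      mgf S pm t ≤ exp (M * t ^ 2 / 8) := by
    intro t
    set g : ℝ → ℝ := fun x => exp (t * (x - q)) with hg
    have hgmeas : Measurable g := by
      apply Measurable.exp; exact (measurable_id.sub_const q).const_mul t
    have hprod : ∀ y : Fin M → ℝ, exp (t * S y) = ∏ j, g (y j) := by
      intro y
      rw [hS]
      simp only [Finset.mul_sum]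
      rw [Real.exp_sum]
    have hint : Integrable (fun y => exp (t * S y)) pm := by
      simp only [funext hprod]  -- rewrite function
      exact pi_integrable_prod (Fin M) g (bernoulliReal_integrable g hgmeas)
    refine ⟨hint, ?_⟩
    have h1 : mgf S pm t = (∫ x, g x ∂(bernoulliReal q)) ^ M := by
      rw [mgf]
      rw [show (fun ω => exp (t * S ω)) = fun y => ∏ j, g (y j) from funext hprod] at hint ⊢
      calc ∫ y, ∏ j, g (y j) ∂pm = (∫ x, g x ∂(bernoulliReal q)) ^ (Fintype.card (Fin M)) :=
            pi_integral_pow (Fin M) g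
        _ = (∫ x, g x ∂(bernoulliReal q)) ^ M := by rw [Fintype.card_fin]
    rw [h1]
    have h2 : ∫ x, g x ∂(bernoulliReal q) = q * exp (t * (1 - q)) + (1 - q) * exp (-(t * q)) := by
      rw [bernoulliReal_integral hq0 hq1 g hgmeas, hg]
      norm_num
    have h3 : (0:ℝ) ≤ ∫ x, g x ∂(bernoulliReal q) := by
      rw [h2]
      have := exp_pos (t * (1 - q)); have := exp_pos (-(t * q)); nlinarith
    calc (∫ x, g x ∂(bernoulliReal q)) ^ M ≤ (exp (t ^ 2 / 8)) ^ M := by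
          apply pow_le_pow_left₀ h3
          rw [h2]; exact bernoulli_mgf_le q t hq0 hq1
      _ = exp (M * t ^ 2 / 8) := by
          rw [← Real.exp_nat_mul]; ring_nf
  -- upper tail
  have hup : pm {y | (M:ℝ) * η ≤ S y} ≤ ENNReal.ofReal (exp (-2 * M * η ^ 2)) := by
    obtain ⟨hint, hb⟩ := hmgf (4 * η)
    have := measure_ge_le_exp_mul_mgf (μ := pm) (X := S) (t := 4 * η) ((M:ℝ) * η)
      (by positivity) hint
    rw [ENNReal.le_ofReal_iff_toReal_le (measure_ne_top _ _) (exp_pos _).le]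
    calc (pm {y | (M:ℝ) * η ≤ S y}).toReal ≤ exp (-(4 * η) * ((M:ℝ) * η)) * mgf S pm (4 * η) :=
          this
      _ ≤ exp (-(4 * η) * ((M:ℝ) * η)) * exp ((M:ℝ) * (4 * η) ^ 2 / 8) := by
          apply mul_le_mul_of_nonneg_left hb (exp_pos _).le
      _ = exp (-2 * M * η ^ 2) := by rw [← Real.exp_add]; ring_nf
  -- lower tail
  have hlo : pm {y | S y ≤ -((M:ℝ) * η)} ≤ ENNReal.ofReal (exp (-2 * M * η ^ 2)) := by
    obtain ⟨hint, hb⟩ := hmgf (-(4 * η))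
    have := measure_le_le_exp_mul_mgf (μ := pm) (X := S) (t := -(4 * η)) (-((M:ℝ) * η))
      (by nlinarith) hint
    rw [ENNReal.le_ofReal_iff_toReal_le (measure_ne_top _ _) (exp_pos _).le]
    calc (pm {y | S y ≤ -((M:ℝ) * η)}).toReal
        ≤ exp (-(-(4 * η)) * (-((M:ℝ) * η))) * mgf S pm (-(4 * η)) := this
      _ ≤ exp (-(-(4 * η)) * (-((M:ℝ) * η))) * exp ((M:ℝ) * (-(4 * η)) ^ 2 / 8) := by
          apply mul_le_mul_of_nonneg_left hb (exp_pos _).le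
      _ = exp (-2 * M * η ^ 2) := by rw [← Real.exp_add]; ring_nf
  -- combine
  have hsub : {y : Fin M → ℝ | η < |(M:ℝ)⁻¹ * (∑ j, y j) - q|}
      ⊆ {y | (M:ℝ) * η ≤ S y} ∪ {y | S y ≤ -((M:ℝ) * η)} := by
    intro y hy
    simp only [Set.mem_setOf_eq] at hy
    have hSval : (M:ℝ)⁻¹ * (∑ j, y j) - q = (M:ℝ)⁻¹ * S y := by
      have : S y = (∑ j, y j) - M * q := by
        simp only [hS, Finset.sum_sub_distrib, Finset.sum_const, Finset.card_univ,
          Fintype.card_fin, nsmul_eq_mul]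
      rw [this]
      field_simp
    rw [hSval, abs_mul, abs_of_nonneg (by positivity : (0:ℝ) ≤ (M:ℝ)⁻¹)] at hy
    have hkey : (M:ℝ) * η < |S y| := by
      have h2 : (M:ℝ) * η < (M:ℝ) * ((M:ℝ)⁻¹ * |S y|) := by
        exact mul_lt_mul_of_pos_left hy hMpos
      rwa [← mul_assoc, mul_inv_cancel₀ hMpos.ne', one_mul] at h2
    rcases abs_cases (S y) with ⟨h1, _⟩ | ⟨h1, _⟩
    · left; exact le_of_lt (by rw [h1] at hkey; exact hkey)
    · right
      rw [h1] at hkey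
      simp only [Set.mem_setOf_eq]
      linarith
  calc (Measure.pi fun _ : Fin M => bernoulliReal q) {y | η < |(M:ℝ)⁻¹ * (∑ j, y j) - q|}
      ≤ pm ({y | (M:ℝ) * η ≤ S y} ∪ {y | S y ≤ -((M:ℝ) * η)}) := measure_mono hsub
    _ ≤ pm {y | (M:ℝ) * η ≤ S y} + pm {y | S y ≤ -((M:ℝ) * η)} := measure_union_le _ _
    _ ≤ ENNReal.ofReal (exp (-2 * M * η ^ 2)) + ENNReal.ofReal (exp (-2 * M * η ^ 2)) :=
        add_le_add hup hlo
    _ = ENNReal.ofReal (2 * exp (-2 * M * η ^ 2)) := by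
        rw [← ENNReal.ofReal_add (exp_pos _).le (exp_pos _).le]; ring_nf



lemma card_filter_perm {N : ℕ} (σ : Equiv.Perm (Fin N)) (Q : Fin N → Prop) [DecidablePred Q] :
    (univ.filter fun j => Q (σ j)).card = (univ.filter Q).card := by
  apply Finset.card_bij (fun j _ => σ j)
  · intro a ha; simp only [mem_filter, mem_univ, true_and] at ha ⊢; exact ha
  · intro a _ b _ h; exact σ.injective h
  · intro b hb
    refine ⟨σ.symm b, ?_, by simp⟩
    simp only [mem_filter, mem_univ, true_and] at hb ⊢
    simpa using hb

lemma card_filter_coe_lt {N : ℕ} (k : ℕ) (hk : k ≤ N) :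
    (univ.filter fun m : Fin N => (m : ℕ) < k).card = k := by
  have h := Finset.card_bij' (s := univ.filter fun m : Fin N => (m : ℕ) < k)
    (t := (univ : Finset (Fin k)))
    (fun m hm => (⟨(m : ℕ), (mem_filter.mp hm).2⟩ : Fin k))
    (fun a _ => Fin.castLE hk a) ?_ ?_ ?_ ?_
  · rw [h, Finset.card_univ, Fintype.card_fin]
  · intro a _; exact mem_univ _
  · intro a ha
    simp only [mem_filter, mem_univ, true_and, Fin.coe_castLE]
    exact a.isLt
  · intro a _; ext; simp
  · intro a _; ext; simp

lemma card_filter_coe_le {N : ℕ} (k : ℕ) (hk : k ≤ N) :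
    (univ.filter fun m : Fin N => k ≤ (m : ℕ)).card = N - k := by
  have h1 : (univ.filter fun m : Fin N => k ≤ (m : ℕ))
      = univ \ (univ.filter fun m : Fin N => (m : ℕ) < k) := by
    rw [← Finset.filter_not]
    apply Finset.filter_congr
    intro m _
    simp [not_lt]
  rw [h1, Finset.card_sdiff_of_subset (Finset.filter_subset _ _), Finset.card_univ, Fintype.card_fin,
    card_filter_coe_lt k hk]

lemma le_orderStat_iff {n : ℕ} (v : Fin n → ℝ) (k : Fin n) (t : ℝ) :
    t ≤ orderStat v k ↔ (univ.filter fun i => v i < t).card ≤ (k : ℕ) := by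
  classical
  set σ := Tuple.sort v with hσ
  have hmono : Monotone (v ∘ σ) := Tuple.monotone_sort v
  have hcard : (univ.filter fun i => v i < t).card
      = (univ.filter fun i => (v ∘ σ) i < t).card :=
    (card_filter_perm σ (fun i => v i < t)).symm
  have horder : orderStat v k = (v ∘ σ) k := rfl
  rw [horder, hcard]
  constructor
  · intro h
    calc (univ.filter fun i => (v ∘ σ) i < t).card
        ≤ (univ.filter fun i : Fin n => (i : ℕ) < (k : ℕ)).card := by
          apply Finset.card_le_card
          intro i hi
          simp only [mem_filter, mem_univ, true_and] at hi ⊢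
          by_contra hc
          push_neg at hc
          have : k ≤ i := by rwa [Fin.le_def]
          exact absurd hi (not_lt.mpr (le_trans h (hmono this)))
      _ = (k : ℕ) := card_filter_coe_lt _ k.isLt.le
  · intro h
    by_contra hc
    push_neg at hc
    have hsub : (univ.filter fun i : Fin n => (i : ℕ) < (k : ℕ) + 1)
        ⊆ (univ.filter fun i => (v ∘ σ) i < t) := by
      intro i hi
      simp only [mem_filter, mem_univ, true_and] at hi ⊢
      have : i ≤ k := by rw [Fin.le_def]; omega
      exact lt_of_le_of_lt (hmono this) hc
    have := Finset.card_le_card hsub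
    rw [card_filter_coe_lt _ k.isLt] at this
    omega

lemma count_rank_le {N : ℕ} (v : Fin N → ℝ) (k : ℕ) (hk : k ≤ N) :
    (univ.filter fun i : Fin N =>
      k ≤ (univ.filter fun j => v j < v i).card).card ≤ N - k := by
  classical
  set σ := Tuple.sort v with hσ
  have hmono : Monotone (v ∘ σ) := Tuple.monotone_sort v
  have hle : ∀ i : Fin N, (univ.filter fun j => v j < v i).card ≤ (σ.symm i : ℕ) := by
    intro i
    have h1 : (univ.filter fun j => v j < v i).card
        = (univ.filter fun j => (v ∘ σ) j < v i).card :=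
      (card_filter_perm σ (fun j => v j < v i)).symm
    have h2 : v i = (v ∘ σ) (σ.symm i) := by simp
    rw [h1, h2]
    calc (univ.filter fun j => (v ∘ σ) j < (v ∘ σ) (σ.symm i)).card
        ≤ (univ.filter fun j : Fin N => (j : ℕ) < ((σ.symm i : Fin N) : ℕ)).card := by
          apply Finset.card_le_card
          intro j hj
          simp only [mem_filter, mem_univ, true_and] at hj ⊢
          by_contra hc
          push_neg at hc
          have : σ.symm i ≤ j := by rwa [Fin.le_def]
          exact absurd hj (not_lt.mpr (hmono this))
      _ = ((σ.symm i : Fin N) : ℕ) := card_filter_coe_lt _ (σ.symm i).isLt.le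
  calc (univ.filter fun i : Fin N => k ≤ (univ.filter fun j => v j < v i).card).card
      ≤ (univ.filter fun i : Fin N => k ≤ ((σ.symm i : Fin N) : ℕ)).card := by
        apply Finset.card_le_card
        intro i hi
        simp only [mem_filter, mem_univ, true_and] at hi ⊢
        exact le_trans hi (hle i)
    _ = (univ.filter fun m : Fin N => k ≤ (m : ℕ)).card :=
        card_filter_perm σ.symm (fun m => k ≤ (m : ℕ))
    _ = N - k := card_filter_coe_le k hk

lemma measurable_cnt {N : ℕ} (i : Fin N) :
    Measurable (fun v : Fin N → ℝ => (univ.filter fun j => v j < v i).card) := by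
  simp_rw [Finset.card_filter]
  exact Finset.measurable_sum _ (fun j _ => Measurable.ite
    (measurableSet_lt (measurable_pi_apply j) (measurable_pi_apply i))
    measurable_const measurable_const)

end Helpers

open Finset in
/-- Conformal guarantee with estimated targets: the parameters `X i` are i.i.d. with law `ν`;
conditionally on `X i = θ`, the `M` simulation outcomes `ℓ i 0, ..., ℓ i (M-1)` are i.i.d.
`Bernoulli (p θ)` (the joint law of `(X i, (ℓ i j)_j)` is `ν ⊗ₘ κ` where
`κ θ = ⨂ j, Bernoulli (p θ)`), independently across `i`. The observed label is the empirical
mean `Ȳ i = (1/M) * ∑ j, ℓ i j`. Running normalized inductive conformal prediction against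
the estimates `Ȳ i` with predictor `f` and positive normalizing function `u`, with `τ̃_ε` the
`⌈(n+1)(1-ε)⌉`-th smallest of the first `n` normalized scores, for every `η > 0` the true
satisfaction probability `p (X (n+1))` satisfies
`P(|p (X (n+1)) - f (X (n+1))| ≤ τ̃_ε * u (X (n+1)) + η) ≥ 1 - ε - 2 * exp (-2 * M * η ^ 2)`. -/
theorem nicp_coverage_estimated_targets
    {Ω Θ : Type*} [MeasurableSpace Ω] [MeasurableSpace Θ]
    (P : Measure Ω) [IsProbabilityMeasure P]
    {n : ℕ} (M : ℕ) (hM : 1 ≤ M)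
    (X : Fin (n + 1) → Ω → Θ) (hX : ∀ i, Measurable (X i))
    (ℓ : Fin (n + 1) → Fin M → Ω → ℝ) (hℓ : ∀ i j, Measurable (ℓ i j))
    (p : Θ → ℝ) (hp : Measurable p) (hp01 : ∀ θ, p θ ∈ Set.Icc (0 : ℝ) 1)
    (ν : Measure Θ) [IsProbabilityMeasure ν]
    (κ : Kernel Θ (Fin M → ℝ)) [IsMarkovKernel κ]
    (hκ : ∀ θ, κ θ = Measure.pi (fun _ : Fin M => bernoulliReal (p θ)))
    (hlaw : ∀ i, Measure.map (fun ω => (X i ω, fun j => ℓ i j ω)) P = ν ⊗ₘ κ)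
    (hindep : iIndepFun
      (fun i ω => (X i ω, fun j => ℓ i j ω)) P)
    (f : Θ → ℝ) (hf : Measurable f)
    (u : Θ → ℝ) (hu : Measurable u) (hupos : ∀ θ, 0 < u θ)
    (ε : ℝ) (hε : ε ∈ Set.Ioo (0 : ℝ) 1)
    (hm : ⌈((n : ℝ) + 1) * (1 - ε)⌉₊ ≤ n)
    (η : ℝ) (hη : 0 < η) :
    P {ω | |p (X (Fin.last n) ω) - f (X (Fin.last n) ω)| ≤
        orderStat
            (fun i : Fin n =>
              |(M : ℝ)⁻¹ * (∑ j, ℓ i.castSucc j ω) - f (X i.castSucc ω)|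
                / u (X i.castSucc ω))
            ⟨⌈((n : ℝ) + 1) * (1 - ε)⌉₊ - 1, by
              have h1 : 0 < ⌈((n : ℝ) + 1) * (1 - ε)⌉₊ :=
                Nat.ceil_pos.mpr (by nlinarith [hε.1, hε.2, Nat.cast_nonneg (α := ℝ) n])
              omega⟩
          * u (X (Fin.last n) ω) + η}
      ≥ ENNReal.ofReal (1 - ε - 2 * Real.exp (-2 * M * η ^ 2)) := by
  classical
  set k : ℕ := ⌈((n : ℝ) + 1) * (1 - ε)⌉₊ with hkdef
  have hk1 : 1 ≤ k :=
    Nat.ceil_pos.mpr (by nlinarith [hε.1, hε.2, Nat.cast_nonneg (α := ℝ) n])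
  have hkceil : ((n : ℝ) + 1) * (1 - ε) ≤ k := Nat.le_ceil _
  -- the score map
  set g : Θ × (Fin M → ℝ) → ℝ :=
    fun z => |(M : ℝ)⁻¹ * (∑ j, z.2 j) - f z.1| / u z.1 with hgdef
  have hgmeas : Measurable g := by
    apply Measurable.div
    · apply Measurable.abs
      apply Measurable.sub
      · exact (Finset.measurable_sum Finset.univ fun j _ =>
          (measurable_pi_apply j).comp measurable_snd).const_mul _
      · exact hf.comp measurable_fst
    · exact hu.comp measurable_fst
  set pair : Fin (n + 1) → Ω → Θ × (Fin M → ℝ) :=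
    fun i ω => (X i ω, fun j => ℓ i j ω) with hpairdef
  have hpairmeas : ∀ i, Measurable (pair i) :=
    fun i => (hX i).prodMk (measurable_pi_lambda _ fun j => hℓ i j)
  set V : Fin (n + 1) → Ω → ℝ := fun i ω => g (pair i ω) with hVdef
  have hVmeas : ∀ i, Measurable (V i) := fun i => hgmeas.comp (hpairmeas i)
  set W : Ω → Fin (n + 1) → ℝ := fun ω i => V i ω with hWdef
  have hWmeas : Measurable W := measurable_pi_lambda _ hVmeas
  set μV : Measure ℝ := Measure.map g (ν ⊗ₘ κ) with hμVdef
  haveI : IsProbabilityMeasure μV := Measure.isProbabilityMeasure_map hgmeas.aemeasurable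
  have hVlaw : ∀ i, Measure.map (V i) P = μV := by
    intro i
    have : V i = g ∘ pair i := rfl
    rw [this, ← Measure.map_map hgmeas (hpairmeas i), hlaw i]
  have hViid : iIndepFun V P :=
    hindep.comp (fun _ => g) (fun _ => hgmeas)
  set mpi : Measure (Fin (n + 1) → ℝ) := Measure.pi fun _ => μV with hmpidef
  haveI : IsProbabilityMeasure mpi := by rw [hmpidef]; infer_instance
  have hWlaw : Measure.map W P = mpi := by
    rw [hmpidef]; symm
    apply Measure.pi_eq
    intro s hs
    rw [Measure.map_apply hWmeas (MeasurableSet.univ_pi hs)]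
    have hpre : W ⁻¹' Set.pi Set.univ s = ⋂ i ∈ Finset.univ, V i ⁻¹' s i := by
      ext ω; simp [Set.mem_pi, hWdef]
    rw [hpre, hViid.measure_inter_preimage_eq_mul Finset.univ (fun i _ => hs i)]
    apply Finset.prod_congr rfl
    intro i _
    rw [← hVlaw i, Measure.map_apply (hVmeas i) (hs i)]
  -- events
  set A : Set (Fin (n + 1) → ℝ) :=
    {v | (univ.filter fun j : Fin (n + 1) => v j < v (Fin.last n)).card ≤ k - 1} with hAdef
  have hAmeas : MeasurableSet A :=
    measurable_cnt (Fin.last n)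
      (show MeasurableSet {m : ℕ | m ≤ k - 1} from (Set.to_countable _).measurableSet)
  set B : Set (Θ × (Fin M → ℝ)) :=
    {z | |(M : ℝ)⁻¹ * (∑ j, z.2 j) - p z.1| ≤ η} with hBdef
  have hBmeas : MeasurableSet B := by
    apply measurableSet_le _ measurable_const
    apply Measurable.abs
    apply Measurable.sub
    · exact (Finset.measurable_sum Finset.univ fun j _ =>
        (measurable_pi_apply j).comp measurable_snd).const_mul _
    · exact hp.comp measurable_fst
  set kidx : Fin n := ⟨k - 1, by omega⟩ with hkidx
  -- conformal event characterization
  have hAiff : ∀ v : Fin (n + 1) → ℝ,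
      v ∈ A ↔ v (Fin.last n) ≤ orderStat (fun i : Fin n => v i.castSucc) kidx := by
    intro v
    rw [le_orderStat_iff]
    have hcc : (univ.filter fun j : Fin (n + 1) => v j < v (Fin.last n)).card
        = (univ.filter fun i : Fin n => v i.castSucc < v (Fin.last n)).card := by
      rw [Finset.card_filter, Finset.card_filter, Fin.sum_univ_castSucc]
      simp
    constructor
    · intro hv; rw [← hcc]; exact hv
    · intro hv; show _ ≤ k - 1; rw [hcc]; exact hv
  -- inclusion of events
  have hincl : W ⁻¹' A ∩ pair (Fin.last n) ⁻¹' B ⊆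
      {ω | |p (X (Fin.last n) ω) - f (X (Fin.last n) ω)| ≤
        orderStat
            (fun i : Fin n =>
              |(M : ℝ)⁻¹ * (∑ j, ℓ i.castSucc j ω) - f (X i.castSucc ω)|
                / u (X i.castSucc ω)) kidx
          * u (X (Fin.last n) ω) + η} := by
    rintro ω ⟨hA, hB⟩
    have hτ := (hAiff (W ω)).mp hA
    set θl := X (Fin.last n) ω with hθl
    set Yb : ℝ := (M : ℝ)⁻¹ * (∑ j, ℓ (Fin.last n) j ω) with hYb
    have hupos' := hupos θl
    have hWlast : W ω (Fin.last n) = |Yb - f θl| / u θl := rfl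
    have hOS : orderStat (fun i : Fin n => W ω i.castSucc) kidx
        = orderStat (fun i : Fin n =>
            |(M : ℝ)⁻¹ * (∑ j, ℓ i.castSucc j ω) - f (X i.castSucc ω)|
              / u (X i.castSucc ω)) kidx := rfl
    rw [hWlast, hOS] at hτ
    set τ := orderStat (fun i : Fin n =>
        |(M : ℝ)⁻¹ * (∑ j, ℓ i.castSucc j ω) - f (X i.castSucc ω)|
          / u (X i.castSucc ω)) kidx with hτdef
    have h1 : |Yb - f θl| ≤ τ * u θl := by
      rw [div_le_iff₀ hupos'] at hτ
      exact hτ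
    have h2 : |Yb - p θl| ≤ η := hB
    show |p θl - f θl| ≤ τ * u θl + η
    calc |p θl - f θl| = |(p θl - Yb) + (Yb - f θl)| := by ring_nf
      _ ≤ |p θl - Yb| + |Yb - f θl| := abs_add_le _ _
      _ = |Yb - p θl| + |Yb - f θl| := by rw [abs_sub_comm]
      _ ≤ η + τ * u θl := add_le_add h2 h1
      _ = τ * u θl + η := by ring
  -- bound on the conformal failure
  have hPA : P ((W ⁻¹' A)ᶜ) ≤ ENNReal.ofReal ε := by
    rw [← Set.preimage_compl, ← Measure.map_apply hWmeas hAmeas.compl, hWlaw]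
    set E : Fin (n + 1) → Set (Fin (n + 1) → ℝ) :=
      fun i => {v | k ≤ (univ.filter fun j => v j < v i).card} with hEdef
    have hEmeas : ∀ i, MeasurableSet (E i) :=
      fun i => measurable_cnt i
        (show MeasurableSet {m : ℕ | k ≤ m} from (Set.to_countable _).measurableSet)
    have hAc : Aᶜ = E (Fin.last n) := by
      ext v
      simp only [hAdef, hEdef, Set.mem_compl_iff, Set.mem_setOf_eq, not_le]
      omega
    rw [hAc]
    -- exchangeability
    have hEeq : ∀ i, mpi (E i) = mpi (E (Fin.last n)) := by
      intro i
      set e : Equiv.Perm (Fin (n + 1)) := Equiv.swap i (Fin.last n) with hedef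
      have hmp : MeasurePreserving
          (MeasurableEquiv.piCongrLeft (fun _ : Fin (n + 1) => ℝ) e) mpi mpi :=
        measurePreserving_piCongrLeft (fun _ => μV) e
      have happ : ∀ (v : Fin (n + 1) → ℝ) (b : Fin (n + 1)),
          (MeasurableEquiv.piCongrLeft (fun _ : Fin (n + 1) => ℝ) e) v (e b) = v b := by
        intro v b
        exact Equiv.piCongrLeft_apply_apply (fun _ => ℝ) e v b
      have hpre : (MeasurableEquiv.piCongrLeft (fun _ : Fin (n + 1) => ℝ) e) ⁻¹' (E i)
          = E (Fin.last n) := by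
        ext v
        set T := (MeasurableEquiv.piCongrLeft (fun _ : Fin (n + 1) => ℝ) e) with hT
        simp only [Set.mem_preimage, hEdef, Set.mem_setOf_eq]
        have hcard : (univ.filter fun j => T v j < T v i).card
            = (univ.filter fun j => v j < v (Fin.last n)).card := by
          rw [← card_filter_perm e (fun j => T v j < T v i)]
          apply Finset.card_nbij id
          · intro a ha
            simp only [mem_coe, mem_filter, mem_univ, true_and, id] at ha ⊢
            rw [happ v a] at ha
            have : T v i = v (Fin.last n) := by
              have : e (Fin.last n) = i := Equiv.swap_apply_right i (Fin.last n)
              rw [← this, happ v (Fin.last n)]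
            rwa [this] at ha
          · intro a _ b _ h; exact h
          · intro b hb
            refine ⟨b, ?_, rfl⟩
            simp only [mem_coe, mem_filter, mem_univ, true_and] at hb ⊢
            rw [happ v b]
            have : T v i = v (Fin.last n) := by
              have : e (Fin.last n) = i := Equiv.swap_apply_right i (Fin.last n)
              rw [← this, happ v (Fin.last n)]
            rwa [this]
        rw [hcard]
      calc mpi (E i) = mpi ((MeasurableEquiv.piCongrLeft (fun _ : Fin (n + 1) => ℝ) e) ⁻¹' (E i)) :=
            (hmp.measure_preimage (hEmeas i).nullMeasurableSet).symm
        _ = mpi (E (Fin.last n)) := by rw [hpre]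
    -- union bound via counting
    have hsum : ((n + 1 : ℕ) : ENNReal) * mpi (E (Fin.last n)) ≤ ((n + 1 - k : ℕ) : ENNReal) := by
      have h1 : ∑ i : Fin (n + 1), mpi (E i) = ((n + 1 : ℕ) : ENNReal) * mpi (E (Fin.last n)) := by
        rw [Finset.sum_congr rfl (fun i _ => hEeq i), Finset.sum_const, Finset.card_univ,
          Fintype.card_fin, nsmul_eq_mul]
      have h2 : ∑ i : Fin (n + 1), mpi (E i) ≤ ((n + 1 - k : ℕ) : ENNReal) := by
        have h3 : ∀ i : Fin (n + 1), mpi (E i) = ∫⁻ v, (E i).indicator 1 v ∂mpi :=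
          fun i => (lintegral_indicator_one (hEmeas i)).symm
        rw [Finset.sum_congr rfl (fun i _ => h3 i),
          ← lintegral_finset_sum _ (fun i _ => measurable_one.indicator (hEmeas i))]
        calc ∫⁻ v, ∑ i : Fin (n + 1), (E i).indicator 1 v ∂mpi
            ≤ ∫⁻ _, ((n + 1 - k : ℕ) : ENNReal) ∂mpi := by
              apply lintegral_mono
              intro v
              show ∑ i : Fin (n + 1), (E i).indicator 1 v ≤ ((n + 1 - k : ℕ) : ENNReal)
              have hcnt : ∑ i : Fin (n + 1), (E i).indicator (1 : (Fin (n + 1) → ℝ) → ENNReal) v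
                  = ((univ.filter fun i : Fin (n + 1) => v ∈ E i).card : ENNReal) := by
                rw [Finset.card_filter]
                push_cast
                apply Finset.sum_congr rfl
                intro i _
                by_cases h : v ∈ E i <;> simp [Set.indicator_apply, h]
              rw [hcnt]
              have := count_rank_le v k (by omega)
              exact_mod_cast Nat.cast_le.mpr this
          _ = ((n + 1 - k : ℕ) : ENNReal) := by rw [lintegral_const, measure_univ, mul_one]
        done
      rw [← h1]; exact h2
    have hNpos : (0 : ℝ) < ((n + 1 : ℕ) : ℝ) := by positivity
    have hdivle : mpi (E (Fin.last n)) ≤ ENNReal.ofReal ε := by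
      have hπle : mpi (E (Fin.last n)) ≤ ((n + 1 - k : ℕ) : ENNReal) / ((n + 1 : ℕ) : ENNReal) := by
        rw [ENNReal.le_div_iff_mul_le (Or.inl (by exact_mod_cast Nat.succ_ne_zero n))
          (Or.inl (ENNReal.natCast_ne_top (n+1)))]
        rw [mul_comm]; exact hsum
      refine le_trans hπle ?_
      have hcast : ((n + 1 - k : ℕ) : ENNReal) / ((n + 1 : ℕ) : ENNReal)
          = ENNReal.ofReal (((n + 1 - k : ℕ) : ℝ) / ((n + 1 : ℕ) : ℝ)) := by
        rw [ENNReal.ofReal_div_of_pos hNpos, ENNReal.ofReal_natCast, ENNReal.ofReal_natCast]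
      rw [hcast]
      apply ENNReal.ofReal_le_ofReal
      rw [div_le_iff₀ hNpos]
      have hNk : ((n + 1 - k : ℕ) : ℝ) = ((n + 1 : ℕ) : ℝ) - k := by
        rw [Nat.cast_sub (by omega)]
      rw [hNk]
      have hNc : ((n + 1 : ℕ) : ℝ) = (n : ℝ) + 1 := by push_cast; ring
      rw [hNc]
      nlinarith [hkceil]
    exact hdivle
  -- bound on the estimation failure
  have hPB : P ((pair (Fin.last n) ⁻¹' B)ᶜ)
      ≤ ENNReal.ofReal (2 * Real.exp (-2 * M * η ^ 2)) := by
    rw [← Set.preimage_compl,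
      ← Measure.map_apply (hpairmeas (Fin.last n)) hBmeas.compl, hlaw (Fin.last n),
      Measure.compProd_apply hBmeas.compl]
    calc ∫⁻ θ, (κ θ) (Prod.mk θ ⁻¹' Bᶜ) ∂ν
        ≤ ∫⁻ _, ENNReal.ofReal (2 * Real.exp (-2 * M * η ^ 2)) ∂ν := by
          apply lintegral_mono
          intro θ
          show (κ θ) (Prod.mk θ ⁻¹' Bᶜ) ≤ ENNReal.ofReal (2 * Real.exp (-2 * M * η ^ 2))
          have hpre : Prod.mk θ ⁻¹' Bᶜ = {y : Fin M → ℝ | η < |(M : ℝ)⁻¹ * (∑ j, y j) - p θ|} := by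
            ext y; simp [hBdef, not_le]
          rw [hpre, hκ θ]
          exact bernoulli_mean_tail (hp01 θ).1 (hp01 θ).2 M hM η hη
      _ = ENNReal.ofReal (2 * Real.exp (-2 * M * η ^ 2)) := by
          rw [lintegral_const, measure_univ, mul_one]
  -- combine
  set c : ℝ := 2 * Real.exp (-2 * M * η ^ 2) with hcdef
  have hc0 : 0 ≤ c := by rw [hcdef]; positivity
  have hABmeas : MeasurableSet (W ⁻¹' A ∩ pair (Fin.last n) ⁻¹' B) :=
    (hWmeas hAmeas).inter (hpairmeas (Fin.last n) hBmeas)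
  have hgoalmeas := hincl
  calc ENNReal.ofReal (1 - ε - c)
      = 1 - ENNReal.ofReal (ε + c) := by
        rw [show (1 : ℝ) - ε - c = 1 - (ε + c) by ring,
          ENNReal.ofReal_sub _ (add_nonneg hε.1.le hc0), ENNReal.ofReal_one]
    _ ≤ 1 - P ((W ⁻¹' A ∩ pair (Fin.last n) ⁻¹' B)ᶜ) := by
        apply tsub_le_tsub_left
        calc P ((W ⁻¹' A ∩ pair (Fin.last n) ⁻¹' B)ᶜ)
            = P ((W ⁻¹' A)ᶜ ∪ (pair (Fin.last n) ⁻¹' B)ᶜ) := by rw [Set.compl_inter]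
          _ ≤ P ((W ⁻¹' A)ᶜ) + P ((pair (Fin.last n) ⁻¹' B)ᶜ) := measure_union_le _ _
          _ ≤ ENNReal.ofReal ε + ENNReal.ofReal c := add_le_add hPA hPB
          _ = ENNReal.ofReal (ε + c) := by
              rw [ENNReal.ofReal_add (le_of_lt hε.1) hc0]
    _ = P (W ⁻¹' A ∩ pair (Fin.last n) ⁻¹' B) := by
        rw [← prob_compl_eq_one_sub hABmeas.compl, compl_compl]
    _ ≤ _ := measure_mono hincl
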